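/- For every martingale m there exists a martingale m' such that for every ω : ℕ → Bool, if m wins against ω (i.e., the values of m on the prefixes of ω are unbounded), then m' strongly wins against ω, i.e., m' [ω 0, …, ω (n−1)] tends to +∞ as n → ∞. -/
import Mathlib


open Filter MeasureTheory Set
open scoped ENNReal

/-- The first `n` bits of `ω`, i.e. the list `[ω 0, …, ω (n-1)]`. -/
def prefixFn (ω : ℕ → Bool) (n : ℕ) : List Bool := List.ofFn fun i : Fin n => ω i

/-- `α` has limit frequency `p`: the fraction of `true`s among the first `N` terms
tends to `p` as `N → ∞`. -/
def LimitFreq (α : ℕ → Bool) (p : ℝ) : Prop :=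
  Tendsto (fun N => (((Finset.range N).filter fun i => α i = true).card : ℝ) / N)
    atTop (nhds p)

/-- The set of indices `i` such that the selection rule `s` selects the term `ω i`. -/
def SelectedIndices (s : List Bool → Bool) (ω : ℕ → Bool) : Set ℕ :=
  {i | s (prefixFn ω i) = true}

/-- The subsequence selected by `s` from `ω`: the selected terms, in increasing order of
index (meaningful when the selected index set is infinite). -/
noncomputable def SelectedSeq (s : List Bool → Bool) (ω : ℕ → Bool) : ℕ → Bool :=
  fun n => ω (Nat.nth (· ∈ SelectedIndices s ω) n)

/-- Requirement II for the selection rule `s` with limit `p`: the subsequence selected by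
`s` is finite or has limit frequency `p`. -/
def SatisfiesII (s : List Bool → Bool) (ω : ℕ → Bool) (p : ℝ) : Prop :=
  (SelectedIndices s ω).Finite ∨ LimitFreq (SelectedSeq s ω) p

/-- A (non-negative) martingale. -/
def IsMartingale (m : List Bool → ℝ) : Prop :=
  (∀ x, 0 ≤ m x) ∧ ∀ x, m x = (m (x ++ [false]) + m (x ++ [true])) / 2

/-- A (non-negative) supermartingale. -/
def IsSupermartingale (m : List Bool → ℝ) : Prop :=
  (∀ x, 0 ≤ m x) ∧ ∀ x, (m (x ++ [false]) + m (x ++ [true])) / 2 ≤ m x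

/-- `m` wins against `ω`: the values of `m` on the prefixes of `ω` are unbounded. -/
def Wins (m : List Bool → ℝ) (ω : ℕ → Bool) : Prop :=
  ∀ C : ℝ, ∃ n, C < m (prefixFn ω n)

/-- The cylinder of all infinite sequences extending the finite string `w`. -/
def cyl (w : List Bool) : Set (ℕ → Bool) := {ω | prefixFn ω w.length = w}

/-- `μ` is the uniform (fair-coin) measure on Cantor space, i.e. the infinite product
over `ℕ` of the uniform measure on `Bool`; it is characterized by its values on
cylinders: `μ (cyl w) = 2 ^ (- length w)`. -/
def IsUniformMeasure (μ : Measure (ℕ → Bool)) : Prop :=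
  ∀ w : List Bool, μ (cyl w) = ((2 : ℝ≥0∞) ^ w.length)⁻¹

/-- `X` is an effectively null set: some computable `g` produces, for every `k`, a
sequence of (optional) strings whose cylinders cover `X` and whose total measure is at
most `2^(-k)`. -/
def EffNull (X : Set (ℕ → Bool)) : Prop :=
  ∃ g : ℕ → ℕ → Option (List Bool), Computable₂ g ∧
    ∀ k : ℕ,
      (X ⊆ ⋃ n : ℕ, ⋃ w ∈ g k n, cyl w) ∧
      (∑' n : ℕ, ((g k n).elim 0 fun w => ((2 : ℝ≥0∞) ^ w.length)⁻¹)) ≤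
        ((2 : ℝ≥0∞) ^ k)⁻¹

/-- `ω` is Martin-Löf random: it belongs to no effectively null set. -/
def MLRandom (ω : ℕ → Bool) : Prop := ∀ X : Set (ℕ → Bool), EffNull X → ω ∉ X

/-- A canonical `Primcodable` structure on `ℚ`, via its canonical enumeration. -/
instance : Primcodable ℚ := Primcodable.ofEquiv ℕ (Denumerable.eqv ℚ)

/-- `f` is lower semicomputable: it is the pointwise supremum of a computable family of
rationals, nondecreasing in the second argument. -/
def LowerSemicomputableFn (f : List Bool → ℝ) : Prop :=
  ∃ g : List Bool → ℕ → ℚ, Computable₂ g ∧ (∀ x, Monotone fun n => g x n) ∧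
    ∀ x, f x = ⨆ n, ((g x n : ℝ))

/-- `f` is computable: some computable family of rationals approximates it within
`2^(-n)`. -/
def ComputableFn (f : List Bool → ℝ) : Prop :=
  ∃ g : List Bool → ℕ → ℚ, Computable₂ g ∧
    ∀ x n, |((g x n : ℝ)) - f x| ≤ (2 : ℝ) ^ (-(n : ℤ))

section AuxSavings
open Classical

noncomputable def stopM (m : List Bool → ℝ) (c : ℝ) (x : List Bool) : ℝ :=
  if h : ∃ n, n ≤ x.length ∧ c ≤ m (x.take n) then m (x.take (Nat.find h)) else m x

lemma stopM_nonneg (m : List Bool → ℝ) (hm : ∀ x, 0 ≤ m x) (c : ℝ) (x : List Bool) :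
    0 ≤ stopM m c x := by
  unfold stopM; split_ifs <;> apply hm

lemma take_app (x : List Bool) (b : Bool) {n : ℕ} (hn : n ≤ x.length) :
    (x ++ [b]).take n = x.take n :=
  List.take_append_of_le_length hn

lemma stopM_append_pos (m : List Bool → ℝ) (c : ℝ) (x : List Bool) (b : Bool)
    (h : ∃ n, n ≤ x.length ∧ c ≤ m (x.take n)) :
    stopM m c (x ++ [b]) = stopM m c x := by
  have h' : ∃ n, n ≤ (x ++ [b]).length ∧ c ≤ m ((x ++ [b]).take n) := by
    obtain ⟨n, hn, hc⟩ := h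
    exact ⟨n, ⟨le_trans hn (by simp), by rwa [take_app x b hn]⟩⟩
  have hfind := Nat.find_spec h
  have hfind' := Nat.find_spec h'
  have h1 : Nat.find h' ≤ Nat.find h := by
    apply Nat.find_le
    refine ⟨le_trans hfind.1 (by simp), ?_⟩
    rw [take_app x b hfind.1]; exact hfind.2
  have h2 : Nat.find h ≤ Nat.find h' := by
    apply Nat.find_le
    have hle : Nat.find h' ≤ x.length := le_trans h1 hfind.1
    refine ⟨hle, ?_⟩
    have := hfind'.2
    rwa [take_app x b hle] at this
  have heq : Nat.find h' = Nat.find h := le_antisymm h1 h2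
  rw [stopM, stopM, dif_pos h, dif_pos h', heq, take_app x b hfind.1]

lemma stopM_append_neg (m : List Bool → ℝ) (c : ℝ) (x : List Bool) (b : Bool)
    (h : ¬ ∃ n, n ≤ x.length ∧ c ≤ m (x.take n)) :
    stopM m c (x ++ [b]) = m (x ++ [b]) := by
  rw [stopM]
  split_ifs with h'
  · have hfind := Nat.find_spec h'
    have hgt : x.length < Nat.find h' := by
      by_contra hle
      push_neg at hle
      refine h ⟨Nat.find h', hle, ?_⟩
      have := hfind.2
      rwa [take_app x b hle] at this
    have hub : Nat.find h' ≤ x.length + 1 := by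
      have := hfind.1; simpa using this
    have : Nat.find h' = x.length + 1 := by omega
    rw [this]
    congr 1
    apply List.take_of_length_le
    simp
  · rfl

lemma stopM_avg (m : List Bool → ℝ) (hm : IsMartingale m) (c : ℝ) (x : List Bool) :
    stopM m c x = (stopM m c (x ++ [false]) + stopM m c (x ++ [true])) / 2 := by
  by_cases h : ∃ n, n ≤ x.length ∧ c ≤ m (x.take n)
  · rw [stopM_append_pos m c x false h, stopM_append_pos m c x true h]; ring
  · rw [stopM_append_neg m c x false h, stopM_append_neg m c x true h,
      stopM, dif_neg h]
    exact hm.2 x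

lemma stopM_le_sum (m : List Bool → ℝ) (hm : ∀ x, 0 ≤ m x) (c : ℝ) (x : List Bool) :
    stopM m c x ≤ ∑ n ∈ Finset.range (x.length + 1), m (x.take n) := by
  have key : ∀ j ≤ x.length, m (x.take j) ≤ ∑ n ∈ Finset.range (x.length + 1), m (x.take n) := by
    intro j hj
    exact Finset.single_le_sum (f := fun n => m (x.take n)) (fun i _ => hm _) (Finset.mem_range.2 (Nat.lt_succ_of_le hj))
  rw [stopM]
  split_ifs with h
  · exact key _ (Nat.find_spec h).1
  · have := key x.length le_rfl
    rwa [List.take_length] at this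

lemma le_stopM (m : List Bool → ℝ) (c : ℝ) (x : List Bool)
    (h : ∃ n, n ≤ x.length ∧ c ≤ m (x.take n)) : c ≤ stopM m c x := by
  rw [stopM, dif_pos h]
  exact (Nat.find_spec h).2

lemma prefixFn_take (ω : ℕ → Bool) {j n : ℕ} (h : j ≤ n) :
    (prefixFn ω n).take j = prefixFn ω j := by
  apply List.ext_getElem
  · simp [prefixFn]; omega
  · intro i h1 h2
    simp [prefixFn]

end AuxSavings

/-- For every martingale `m` there is a martingale `m'` that strongly wins (its capital
tends to `+∞`) against every sequence against which `m` wins. -/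
theorem wins_to_strong_wins (m : List Bool → ℝ) (hm : IsMartingale m) :
    ∃ m' : List Bool → ℝ, IsMartingale m' ∧
      ∀ ω : ℕ → Bool, Wins m ω →
        Tendsto (fun n => m' (prefixFn ω n)) atTop atTop := by
  set m' : List Bool → ℝ := fun x => ∑' k : ℕ, (1/2 : ℝ) ^ k * stopM m (2 ^ k) x with hm'
  have hsumm : ∀ x, Summable (fun k : ℕ => (1/2 : ℝ) ^ k * stopM m (2 ^ k) x) := by
    intro x
    apply Summable.of_nonneg_of_le
    · intro k
      exact mul_nonneg (by positivity) (stopM_nonneg m hm.1 _ _)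
    · intro k
      exact mul_le_mul_of_nonneg_left (stopM_le_sum m hm.1 _ x) (by positivity)
    · exact (summable_geometric_of_lt_one (by norm_num) (by norm_num)).mul_right _
  refine ⟨m', ⟨fun x => tsum_nonneg fun k =>
    mul_nonneg (by positivity) (stopM_nonneg m hm.1 _ _), fun x => ?_⟩, ?_⟩
  · rw [hm']
    simp only
    rw [← Summable.tsum_add (hsumm (x ++ [false])) (hsumm (x ++ [true])), ← tsum_div_const]
    congr 1
    funext k
    rw [stopM_avg m hm (2 ^ k) x]
    ring
  · intro ω hw
    rw [tendsto_atTop]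
    intro b
    obtain ⟨K, hK⟩ := exists_nat_ge b
    choose nf hnf using fun k : ℕ => hw ((2 : ℝ) ^ k)
    set N := (Finset.range (K + 1)).sup nf with hN
    rw [eventually_atTop]
    refine ⟨N, fun n hn => ?_⟩
    have hlen : (prefixFn ω n).length = n := by simp [prefixFn]
    have key : ∀ k ∈ Finset.range (K + 1),
        (1 : ℝ) ≤ (1/2 : ℝ) ^ k * stopM m (2 ^ k) (prefixFn ω n) := by
      intro k hk
      have hnk : nf k ≤ n := le_trans (Finset.le_sup hk) hn
      have hex : ∃ j, j ≤ (prefixFn ω n).length ∧ (2:ℝ) ^ k ≤ m ((prefixFn ω n).take j) := by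
        refine ⟨nf k, by omega, ?_⟩
        rw [prefixFn_take ω hnk]
        exact (hnf k).le
      have := le_stopM m ((2:ℝ) ^ k) (prefixFn ω n) hex
      calc (1 : ℝ) = (1/2 : ℝ) ^ k * 2 ^ k := by
            rw [div_pow, one_pow, div_mul_cancel₀]; positivity
        _ ≤ _ := mul_le_mul_of_nonneg_left this (by positivity)
    calc b ≤ (K : ℝ) := hK
      _ ≤ (K + 1 : ℕ) := by push_cast; linarith
      _ = ∑ k ∈ Finset.range (K + 1), (1 : ℝ) := by simp
      _ ≤ ∑ k ∈ Finset.range (K + 1), (1/2 : ℝ) ^ k * stopM m (2 ^ k) (prefixFn ω n) :=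
          Finset.sum_le_sum key
      _ ≤ m' (prefixFn ω n) := by
          apply Summable.sum_le_tsum _ (fun k _ =>
            mul_nonneg (by positivity) (stopM_nonneg m hm.1 _ _)) (hsumm _)
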